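/- Consider the (n+m)×(n+m) unmodified Laplacian L_G = [[L_{C_n}, 0],[-C, L_{S_m} + D_C]] of model III with w_i ≥ 0, w = Σ w_i > 0. Its spectrum is the union {α_l : 0 ≤ l ≤ n, l even} ∪ {β⁻_{m,w}, 1, β⁺_{m,w}}, where α_l = 2(1-cos(lπ/n)) and β^±_{m,w} are the roots of λ² - (m+w)λ + w = 0. In particular, if β⁻_{m,w} ∉ {α_l}, the spectral gap (second-smallest eigenvalue) of L_G equals min{α_2, β⁻_{m,w}}. -/

import Mathlib

open Matrix

/-- Laplacian of the undirected cycle on `n` vertices. -/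
def cycleLap (n : ℕ) : Matrix (Fin n) (Fin n) ℝ :=
  fun i j => if i = j then 2
    else if (i.val + 1) % n = j.val ∨ (j.val + 1) % n = i.val then -1 else 0

/-- Laplacian of the undirected star on `m` vertices, hub first. -/
def starLap (m : ℕ) : Matrix (Fin m) (Fin m) ℝ :=
  fun i j =>
    if i.val = 0 ∧ j.val = 0 then (m : ℝ) - 1
    else if i.val = 0 ∨ j.val = 0 then -1
    else if i = j then 1 else 0

/-- `α_l = 2(1 - cos(lπ/n))`. -/
noncomputable def cycAlpha (n l : ℕ) : ℝ := 2 * (1 - Real.cos (l * Real.pi / n))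

/-- smaller root of `λ² - (m+w)λ + w`. -/
noncomputable def betaMinus (m : ℕ) (w : ℝ) : ℝ :=
  (((m : ℝ) + w) - Real.sqrt (((m : ℝ) + w) ^ 2 - 4 * w)) / 2

/-- larger root of `λ² - (m+w)λ + w`. -/
noncomputable def betaPlus (m : ℕ) (w : ℝ) : ℝ :=
  (((m : ℝ) + w) + Real.sqrt (((m : ℝ) + w) ^ 2 - 4 * w)) / 2

/-- The unmodified Laplacian `L_G = [[L_{C_n}, 0], [-C, L_{S_m} + D_C]]` of model III. -/
noncomputable def unmodLap (n m : ℕ) (wv : ℕ → ℝ) :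
    Matrix (Fin n ⊕ Fin m) (Fin n ⊕ Fin m) ℝ :=
  Matrix.fromBlocks (cycleLap n) 0
    (fun i j => -(if i.val = 0 then wv j.val else 0))
    (starLap m + Matrix.diagonal
      (fun i : Fin m => if i.val = 0 then ∑ j ∈ Finset.range n, wv j else 0))


lemma spec_iff_det {N : Type*} [Fintype N] [DecidableEq N] (M : Matrix N N ℝ) (x : ℝ) :
    x ∈ spectrum ℝ M ↔ (x • (1 : Matrix N N ℝ) - M).det = 0 := by
  rw [spectrum.mem_iff, Matrix.isUnit_iff_isUnit_det, isUnit_iff_ne_zero, not_not,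
    Algebra.algebraMap_eq_smul_one]

lemma det_iff_eig {N : Type*} [Fintype N] [DecidableEq N] (M : Matrix N N ℝ) (x : ℝ) :
    (x • (1 : Matrix N N ℝ) - M).det = 0 ↔ ∃ v ≠ 0, M.mulVec v = x • v := by
  rw [← Matrix.exists_mulVec_eq_zero_iff]
  constructor
  · rintro ⟨v, hv, h⟩
    refine ⟨v, hv, ?_⟩
    rw [Matrix.sub_mulVec, Matrix.smul_mulVec, Matrix.one_mulVec, sub_eq_zero] at h
    exact h.symm
  · rintro ⟨v, hv, h⟩
    refine ⟨v, hv, ?_⟩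
    rw [Matrix.sub_mulVec, Matrix.smul_mulVec, Matrix.one_mulVec, sub_eq_zero, h]

lemma det_block {k l : Type*} [Fintype k] [DecidableEq k] [Fintype l] [DecidableEq l]
    (A : Matrix k k ℝ) (C : Matrix l k ℝ) (D : Matrix l l ℝ) (x : ℝ) :
    (x • (1 : Matrix (k ⊕ l) (k ⊕ l) ℝ) - fromBlocks A 0 C D).det =
      (x • (1 : Matrix k k ℝ) - A).det * (x • (1 : Matrix l l ℝ) - D).det := by
  have h1 : x • (1 : Matrix (k ⊕ l) (k ⊕ l) ℝ) - fromBlocks A 0 C D =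
      fromBlocks (x • 1 - A) 0 (-C) (x • 1 - D) := by
    rw [← fromBlocks_one, fromBlocks_smul]
    ext (i | i) (j | j) <;> simp [fromBlocks]
  rw [h1, det_fromBlocks_zero₁₂]


lemma starLap_mulVec (m : ℕ) (hm : 4 ≤ m) (v : Fin m → ℝ) (i : Fin m) :
    (starLap m).mulVec v i =
      if i.val = 0 then (m : ℝ) * v ⟨0, by omega⟩ - ∑ j, v j
      else v i - v ⟨0, by omega⟩ := by
  set z : Fin m := ⟨0, by omega⟩ with hz
  have hzval : z.val = 0 := rfl
  unfold Matrix.mulVec dotProduct starLap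
  by_cases hi : i.val = 0
  · rw [if_pos hi]
    have key : ∀ j : Fin m, (if i.val = 0 ∧ j.val = 0 then (m : ℝ) - 1
        else if i.val = 0 ∨ j.val = 0 then -1 else if i = j then 1 else 0) * v j
        = (if j = z then (m : ℝ) * v z else 0) - v j := by
      intro j
      by_cases hj : j = z
      · subst hj; simp [hi, hzval]; ring
      · have hj0 : j.val ≠ 0 := fun h => hj (Fin.ext (h.trans hzval.symm))
        simp [hi, hj0, hj]
    simp only [key]
    rw [Finset.sum_sub_distrib, Finset.sum_ite_eq' Finset.univ z (fun _ => (m:ℝ) * v z)]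
    simp
  · rw [if_neg hi]
    have hiz : i ≠ z := fun h => hi (by rw [h])
    have key : ∀ j : Fin m, (if i.val = 0 ∧ j.val = 0 then (m : ℝ) - 1
        else if i.val = 0 ∨ j.val = 0 then -1 else if i = j then 1 else 0) * v j
        = (if j = z then -v z else 0) + (if j = i then v j else 0) := by
      intro j
      by_cases hj : j = z
      · subst hj; simp [hzval, hi, Ne.symm hiz]
      · have hj0 : j.val ≠ 0 := fun h => hj (Fin.ext (h.trans hzval.symm))
        by_cases hji : j = i
        · subst hji; simp [hi, hj0, hj]
        · simp [hi, hj0, hji, Ne.symm hji, hj]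
    simp only [key]
    rw [Finset.sum_add_distrib, Finset.sum_ite_eq' Finset.univ z (fun _ => -v z),
      Finset.sum_ite_eq' Finset.univ i (fun j => v j)]
    simp; ring



lemma disc_nonneg (m : ℕ) (hm : 4 ≤ m) (w : ℝ) (hw : 0 < w) :
    0 ≤ ((m : ℝ) + w) ^ 2 - 4 * w := by
  have hm' : (4 : ℝ) ≤ (m : ℝ) := by exact_mod_cast hm
  nlinarith

lemma quad_iff (m : ℕ) (hm : 4 ≤ m) (w : ℝ) (hw : 0 < w) (x : ℝ) :
    x ^ 2 - ((m : ℝ) + w) * x + w = 0 ↔ x = betaMinus m w ∨ x = betaPlus m w := by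
  have hd := disc_nonneg m hm w hw
  have hs : Real.sqrt (((m : ℝ) + w) ^ 2 - 4 * w) ^ 2 = ((m : ℝ) + w) ^ 2 - 4 * w :=
    Real.sq_sqrt hd
  constructor
  · intro h
    have h2 : (2 * x - ((m : ℝ) + w)) ^ 2 = ((m : ℝ) + w) ^ 2 - 4 * w := by nlinarith
    have habs : |2 * x - ((m : ℝ) + w)| = Real.sqrt (((m : ℝ) + w) ^ 2 - 4 * w) := by
      rw [← Real.sqrt_sq_eq_abs, h2]
    rcases abs_eq (Real.sqrt_nonneg _) |>.mp habs with h3 | h3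
    · right; unfold betaPlus; linarith
    · left; unfold betaMinus; linarith
  · rintro (rfl | rfl) <;> [unfold betaMinus; unfold betaPlus] <;> nlinarith [hs]

lemma block_mulVec (m : ℕ) (hm : 4 ≤ m) (w : ℝ) (v : Fin m → ℝ) (i : Fin m) :
    (starLap m + Matrix.diagonal (fun i : Fin m => if i.val = 0 then w else 0)).mulVec v i =
      if i.val = 0 then ((m : ℝ) + w) * v ⟨0, by omega⟩ - ∑ j, v j
      else v i - v ⟨0, by omega⟩ := by
  rw [Matrix.add_mulVec, Pi.add_apply, starLap_mulVec m hm, Matrix.mulVec_diagonal]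
  by_cases hi : i.val = 0
  · have hiz : i = ⟨0, by omega⟩ := Fin.ext hi
    rw [if_pos hi, if_pos hi, if_pos hi, hiz]; ring
  · rw [if_neg hi, if_neg hi, if_neg hi]; ring

lemma star_eig (m : ℕ) (hm : 4 ≤ m) (w : ℝ) (hw : 0 < w) (x : ℝ) :
    (∃ v ≠ 0, (starLap m + Matrix.diagonal
        (fun i : Fin m => if i.val = 0 then w else 0)).mulVec v = x • v)
      ↔ (x = betaMinus m w ∨ x = 1 ∨ x = betaPlus m w) := by
  set z : Fin m := ⟨0, by omega⟩ with hzdef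
  have hzval : z.val = 0 := rfl
  constructor
  · rintro ⟨v, hv, hev⟩
    by_cases hx1 : x = 1
    · exact Or.inr (Or.inl hx1)
    have he : ∀ i : Fin m,
        (if i.val = 0 then ((m : ℝ) + w) * v z - ∑ j, v j else v i - v z) = x * v i := by
      intro i
      rw [← block_mulVec m hm w v i]
      have := congrFun hev i
      simpa using this
    have hne : ∀ i : Fin m, i.val ≠ 0 → (1 - x) * v i = v z := by
      intro i hi
      have := he i
      rw [if_neg hi] at this
      linarith [this]
    have h1x : (1 : ℝ) - x ≠ 0 := sub_ne_zero.mpr (Ne.symm hx1)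
    have hvz : v z ≠ 0 := by
      intro h0
      apply hv
      funext i
      by_cases hi : i.val = 0
      · have : i = z := Fin.ext hi
        rw [this, h0]; rfl
      · have := hne i hi
        rw [h0] at this
        have := mul_eq_zero.mp this
        rcases this with h | h
        · exact absurd h h1x
        · exact h
    set T : ℝ := ∑ j ∈ Finset.univ.erase z, v j with hT
    have hsum : ∑ j, v j = v z + T := by
      rw [hT, ← Finset.add_sum_erase Finset.univ v (Finset.mem_univ z)]
    have hTval : (1 - x) * T = ((m : ℝ) - 1) * v z := by
      rw [hT, Finset.mul_sum]
      have : ∀ j ∈ Finset.univ.erase z, (1 - x) * v j = v z := by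
        intro j hj
        have hj0 : j.val ≠ 0 := by
          intro h
          exact (Finset.mem_erase.mp hj).1 (Fin.ext (h.trans hzval.symm))
        exact hne j hj0
      rw [Finset.sum_congr rfl this, Finset.sum_const, Finset.card_erase_of_mem (Finset.mem_univ z)]
      simp only [Finset.card_univ, Fintype.card_fin, nsmul_eq_mul]
      congr 1
      have : 1 ≤ m := by omega
      push_cast [Nat.cast_sub this]
      ring
    have hE : ((m : ℝ) + w) * v z - (v z + T) = x * v z := by
      have := he z
      rw [if_pos hzval, hsum] at this
      exact this
    have key : (x ^ 2 - ((m : ℝ) + w) * x + w) * v z = 0 := by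
      linear_combination (1 - x) * hE + hTval
    have hquad : x ^ 2 - ((m : ℝ) + w) * x + w = 0 := by
      rcases mul_eq_zero.mp key with h | h
      · exact h
      · exact absurd h hvz
    rcases (quad_iff m hm w hw x).mp hquad with h | h
    · exact Or.inl h
    · exact Or.inr (Or.inr h)
  · intro hx
    have hm1 : 1 < m := by omega
    have hm2 : 2 < m := by omega
    rcases hx with hx | hx | hx
    -- β cases share structure; handle 1 first
    · -- x = betaMinus
      have hq : x ^ 2 - ((m : ℝ) + w) * x + w = 0 := (quad_iff m hm w hw x).mpr (Or.inl hx)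
      refine ⟨fun i => if i.val = 0 then 1 - x else 1, ?_, ?_⟩
      · intro h0
        have := congrFun h0 ⟨1, hm1⟩
        simp at this
      · funext i
        rw [block_mulVec m hm w _ i]
        have hsum : (∑ j, (if (j : Fin m).val = 0 then 1 - x else 1)) = (m : ℝ) - x := by
          have : ∀ j : Fin m, (if j.val = 0 then 1 - x else (1:ℝ))
              = (if j = z then -x else 0) + 1 := by
            intro j
            by_cases hj : j = z
            · subst hj; rw [if_pos hzval, if_pos rfl]; ring
            · have hj0 : j.val ≠ 0 := fun h => hj (Fin.ext (h.trans hzval.symm))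
              rw [if_neg hj0, if_neg hj]; ring
          simp only [this]
          rw [Finset.sum_add_distrib, Finset.sum_ite_eq' Finset.univ z (fun _ => -x)]
          simp only [Finset.mem_univ, if_true, Finset.sum_const, Finset.card_univ,
            Fintype.card_fin, nsmul_eq_mul, mul_one]
          ring
        by_cases hi : i.val = 0
        · rw [if_pos hi, hsum, if_pos hzval, Pi.smul_apply, if_pos hi, smul_eq_mul]
          linear_combination hq
        · rw [if_neg hi, if_pos hzval, Pi.smul_apply, if_neg hi, smul_eq_mul]
          ring
    · -- x = 1
      subst hx
      refine ⟨fun i => if i.val = 1 then 1 else if i.val = 2 then -1 else 0, ?_, ?_⟩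
      · intro h0
        have := congrFun h0 ⟨1, hm1⟩
        simp at this
      · funext i
        rw [block_mulVec m hm w _ i]
        have hvz0 : (if (z : Fin m).val = 1 then (1:ℝ) else if z.val = 2 then -1 else 0) = 0 := by
          rw [hzval]; norm_num
        have hsum : (∑ j : Fin m, (if (j : Fin m).val = 1 then (1:ℝ)
            else if j.val = 2 then -1 else 0)) = 0 := by
          have : ∀ j : Fin m, (if j.val = 1 then (1:ℝ) else if j.val = 2 then -1 else 0)
              = (if j = ⟨1, hm1⟩ then 1 else 0) + (if j = ⟨2, hm2⟩ then -1 else 0) := by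
            intro j
            by_cases hj1 : j = ⟨1, hm1⟩
            · subst hj1; norm_num
            · have h1 : j.val ≠ 1 := fun h => hj1 (Fin.ext h)
              by_cases hj2 : j = ⟨2, hm2⟩
              · subst hj2; norm_num
              · have h2 : j.val ≠ 2 := fun h => hj2 (Fin.ext h)
                rw [if_neg h1, if_neg h2, if_neg hj1, if_neg hj2]; ring
          simp only [this]
          rw [Finset.sum_add_distrib, Finset.sum_ite_eq' Finset.univ (⟨1, hm1⟩ : Fin m),
            Finset.sum_ite_eq' Finset.univ (⟨2, hm2⟩ : Fin m)]
          norm_num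
        by_cases hi : i.val = 0
        · rw [if_pos hi, hsum, Pi.smul_apply, smul_eq_mul]
          have h1 : i.val ≠ 1 := by omega
          have h2 : i.val ≠ 2 := by omega
          rw [if_neg h1, if_neg h2, hvz0]
          ring
        · rw [if_neg hi, hvz0, Pi.smul_apply, smul_eq_mul]
          ring
    · -- x = betaPlus
      have hq : x ^ 2 - ((m : ℝ) + w) * x + w = 0 := (quad_iff m hm w hw x).mpr (Or.inr hx)
      refine ⟨fun i => if i.val = 0 then 1 - x else 1, ?_, ?_⟩
      · intro h0
        have := congrFun h0 ⟨1, hm1⟩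
        simp at this
      · funext i
        rw [block_mulVec m hm w _ i]
        have hsum : (∑ j, (if (j : Fin m).val = 0 then 1 - x else 1)) = (m : ℝ) - x := by
          have : ∀ j : Fin m, (if j.val = 0 then 1 - x else (1:ℝ))
              = (if j = z then -x else 0) + 1 := by
            intro j
            by_cases hj : j = z
            · subst hj; rw [if_pos hzval, if_pos rfl]; ring
            · have hj0 : j.val ≠ 0 := fun h => hj (Fin.ext (h.trans hzval.symm))
              rw [if_neg hj0, if_neg hj]; ring
          simp only [this]
          rw [Finset.sum_add_distrib, Finset.sum_ite_eq' Finset.univ z (fun _ => -x)]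
          simp only [Finset.mem_univ, if_true, Finset.sum_const, Finset.card_univ,
            Fintype.card_fin, nsmul_eq_mul, mul_one]
          ring
        by_cases hi : i.val = 0
        · rw [if_pos hi, hsum, if_pos hzval, Pi.smul_apply, if_pos hi, smul_eq_mul]
          linear_combination hq
        · rw [if_neg hi, if_pos hzval, Pi.smul_apply, if_neg hi, smul_eq_mul]
          ring


lemma mod_succ_eq {n : ℕ} (j : ℕ) (hn : 2 ≤ n) (hj : j < n) :
    (j + 1) % n = if j + 1 = n then 0 else j + 1 := by
  split
  · next h => rw [h, Nat.mod_self]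
  · next h => exact Nat.mod_eq_of_lt (by omega)

lemma mod_pred_eq {n : ℕ} (j : ℕ) (hn : 2 ≤ n) (hj : j < n) :
    (j + (n - 1)) % n = if j = 0 then n - 1 else j - 1 := by
  split
  · next h => subst h; rw [Nat.zero_add]; exact Nat.mod_eq_of_lt (by omega)
  · next h =>
      have he : j + (n - 1) = n + (j - 1) := by omega
      rw [he, Nat.add_mod_left]
      exact Nat.mod_eq_of_lt (by omega)

lemma succ_iff_pred {n : ℕ} (i j : ℕ) (hn : 2 ≤ n) (hi : i < n) (hj : j < n) :
    (i + 1) % n = j ↔ i = (j + (n - 1)) % n := by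
  rw [mod_succ_eq i hn hi, mod_pred_eq j hn hj]
  split_ifs <;> omega

lemma cycleLap_apply (n : ℕ) (hn : 3 ≤ n) (i j : Fin n) :
    cycleLap n i j = 2 * (if j = i then 1 else 0)
      - (if j = (⟨(i.val + 1) % n, Nat.mod_lt _ (by omega)⟩ : Fin n) then 1 else 0)
      - (if j = (⟨(i.val + (n - 1)) % n, Nat.mod_lt _ (by omega)⟩ : Fin n) then 1 else 0) := by
  have hn2 : 2 ≤ n := by omega
  have hi := i.isLt
  have hj := j.isLt
  have hms := mod_succ_eq i.val hn2 hi
  have hmp := mod_pred_eq i.val hn2 hi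
  -- translate Fin equalities to val equalities
  simp only [show (j = (⟨(i.val + 1) % n, Nat.mod_lt _ (by omega)⟩ : Fin n)) ↔ (i.val + 1) % n = j.val
      from ⟨fun h => by rw [h], fun h => Fin.ext h.symm⟩,
    show (j = (⟨(i.val + (n-1)) % n, Nat.mod_lt _ (by omega)⟩ : Fin n)) ↔ (j.val + 1) % n = i.val
      from ⟨fun h => by rw [succ_iff_pred j.val i.val hn2 hj hi]; rw [h],
            fun h => Fin.ext ((succ_iff_pred j.val i.val hn2 hj hi).mp h)⟩,
    show (j = i) ↔ (j.val = i.val) from Fin.ext_iff]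
  have hms' := mod_succ_eq j.val hn2 hj
  have hA : (i.val + 1) % n ≠ i.val := by rw [hms]; split_ifs <;> omega
  have hA' : (j.val + 1) % n ≠ j.val := by rw [hms']; split_ifs <;> omega
  have hC : ¬((i.val + 1) % n = j.val ∧ (j.val + 1) % n = i.val) := by
    rw [hms, hms']; split_ifs <;> omega
  unfold cycleLap
  by_cases h1 : (i.val + 1) % n = j.val <;> by_cases h2 : (j.val + 1) % n = i.val
  · exact absurd ⟨h1, h2⟩ hC
  · have h0' : i ≠ j := by
      intro h; apply hA'; rw [h] at h1; exact h1
    have hv' : ¬ (j.val = i.val) := fun h => h0' (Fin.ext h.symm)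
    rw [if_neg h0', if_pos (Or.inl h1), if_neg hv', if_pos h1, if_neg h2]; ring
  · have h0' : i ≠ j := by
      intro h; apply hA'; rw [h] at h2; exact h2
    have hv' : ¬ (j.val = i.val) := fun h => h0' (Fin.ext h.symm)
    rw [if_neg h0', if_pos (Or.inr h2), if_neg hv', if_neg h1, if_pos h2]; ring
  · by_cases h0 : i = j
    · cases h0
      rw [if_pos rfl, if_pos rfl, if_neg h1]; norm_num
    · have hv' : ¬ (j.val = i.val) := fun h => h0 (Fin.ext h.symm)
      rw [if_neg h0, if_neg (not_or.mpr ⟨h1, h2⟩), if_neg hv', if_neg h1, if_neg h2]; ring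

noncomputable def cw (n : ℕ) : ℂ := Complex.exp (2 * Real.pi * Complex.I / n)

lemma cw_prim (n : ℕ) (hn : n ≠ 0) : IsPrimitiveRoot (cw n) n :=
  Complex.isPrimitiveRoot_exp n hn

lemma cw_pow_n (n : ℕ) (hn : n ≠ 0) : cw n ^ n = 1 := (cw_prim n hn).pow_eq_one

lemma cw_pow_mod (n : ℕ) (hn : n ≠ 0) (a : ℕ) : cw n ^ a = cw n ^ (a % n) := by
  conv_lhs => rw [← Nat.div_add_mod a n, pow_add, pow_mul, cw_pow_n n hn, one_pow, one_mul]

noncomputable def cycD (n : ℕ) : Fin n → ℂ :=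
  fun k => 2 - cw n ^ k.val - cw n ^ ((n - 1) * k.val)

noncomputable def cycF (n : ℕ) : Matrix (Fin n) (Fin n) ℂ :=
  fun i k => cw n ^ (i.val * k.val)

lemma cycC_mulVec (n : ℕ) (hn : 3 ≤ n) (v : Fin n → ℂ) (i : Fin n) :
    ((cycleLap n).map Complex.ofReal).mulVec v i =
      2 * v i - v ⟨(i.val + 1) % n, Nat.mod_lt _ (by omega)⟩
        - v ⟨(i.val + (n - 1)) % n, Nat.mod_lt _ (by omega)⟩ := by
  unfold Matrix.mulVec dotProduct
  have key : ∀ j : Fin n, ((cycleLap n).map Complex.ofReal) i j * v j =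
      2 * (if j = i then v j else 0)
      - (if j = (⟨(i.val + 1) % n, Nat.mod_lt _ (by omega)⟩ : Fin n) then v j else 0)
      - (if j = (⟨(i.val + (n - 1)) % n, Nat.mod_lt _ (by omega)⟩ : Fin n) then v j else 0) := by
    intro j
    rw [Matrix.map_apply, cycleLap_apply n hn i j]
    split_ifs <;> push_cast <;> ring
  simp only [key]
  rw [Finset.sum_sub_distrib, Finset.sum_sub_distrib, ← Finset.mul_sum,
    Finset.sum_ite_eq' Finset.univ i v,
    Finset.sum_ite_eq' Finset.univ (⟨(i.val + 1) % n, Nat.mod_lt _ (by omega)⟩ : Fin n) v,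
    Finset.sum_ite_eq' Finset.univ (⟨(i.val + (n - 1)) % n, Nat.mod_lt _ (by omega)⟩ : Fin n) v]
  simp

lemma cyc_mul_F (n : ℕ) (hn : 3 ≤ n) :
    ((cycleLap n).map Complex.ofReal) * cycF n = cycF n * Matrix.diagonal (cycD n) := by
  have hn0 : n ≠ 0 := by omega
  ext i k
  rw [Matrix.mul_diagonal]
  show ((cycleLap n).map Complex.ofReal).mulVec (fun j => cycF n j k) i = cycF n i k * cycD n k
  rw [cycC_mulVec n hn]
  unfold cycF cycD
  have hmm : ∀ a : ℕ, cw n ^ ((a % n) * k.val) = cw n ^ (a * k.val) := by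
    intro a
    rw [cw_pow_mod n hn0 (a % n * k.val), cw_pow_mod n hn0 (a * k.val), Nat.mul_mod,
      Nat.mod_mod_of_dvd a dvd_rfl, ← Nat.mul_mod]
  simp only []
  rw [hmm (i.val + 1), hmm (i.val + (n - 1)), add_mul, pow_add, add_mul, pow_add]
  ring

lemma cycF_det_ne (n : ℕ) (hn : n ≠ 0) : (cycF n).det ≠ 0 := by
  have heq : cycF n = Matrix.vandermonde (fun i : Fin n => cw n ^ (i : ℕ)) := by
    ext i j
    rw [Matrix.vandermonde_apply]
    exact pow_mul (cw n) i.val j.val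
  rw [heq, Matrix.det_vandermonde_ne_zero_iff]
  intro a b h
  exact Fin.ext ((cw_prim n hn).pow_inj a.isLt b.isLt h)

lemma cyc_detC (n : ℕ) (hn : 3 ≤ n) (x : ℂ) :
    (x • (1 : Matrix (Fin n) (Fin n) ℂ) - (cycleLap n).map Complex.ofReal).det
      = ∏ k : Fin n, (x - cycD n k) := by
  have hn0 : n ≠ 0 := by omega
  have h2 : (x • 1 - (cycleLap n).map Complex.ofReal) * cycF n
      = cycF n * (x • 1 - Matrix.diagonal (cycD n)) := by
    rw [Matrix.sub_mul, Matrix.mul_sub, Matrix.smul_mul, Matrix.one_mul, Matrix.mul_smul,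
      Matrix.mul_one, cyc_mul_F n hn]
  have h3 := congrArg Matrix.det h2
  rw [Matrix.det_mul, Matrix.det_mul, mul_comm ((cycF n).det)] at h3
  have h4 := mul_right_cancel₀ (cycF_det_ne n hn0) h3
  rw [h4]
  have h5 : x • (1 : Matrix (Fin n) (Fin n) ℂ) - Matrix.diagonal (cycD n)
      = Matrix.diagonal (fun k => x - cycD n k) := by
    ext i j
    by_cases hij : i = j
    · subst hij; simp [Matrix.one_apply]
    · simp [Matrix.one_apply, Matrix.diagonal_apply, hij]
  rw [h5, Matrix.det_diagonal]

lemma cyc_det_real (n : ℕ) (hn : 3 ≤ n) (x : ℝ) :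
    (x • (1 : Matrix (Fin n) (Fin n) ℝ) - cycleLap n).det = 0
      ↔ ∃ k : Fin n, (x : ℂ) = cycD n k := by
  have hmap : (Complex.ofRealHom.mapMatrix (x • (1 : Matrix (Fin n) (Fin n) ℝ) - cycleLap n))
      = ((x : ℂ) • 1 - (cycleLap n).map Complex.ofReal) := by
    ext i j
    by_cases hij : i = j <;>
      simp [Matrix.map_apply, Matrix.one_apply, hij]
  have hdet : ((x : ℝ) • (1 : Matrix (Fin n) (Fin n) ℝ) - cycleLap n).det = 0
      ↔ ((x : ℂ) • 1 - (cycleLap n).map Complex.ofReal).det = 0 := by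
    rw [← hmap, ← RingHom.map_det]
    simp
  rw [hdet, cyc_detC n hn]
  rw [Finset.prod_eq_zero_iff]
  constructor
  · rintro ⟨k, _, hk⟩
    exact ⟨k, sub_eq_zero.mp hk⟩
  · rintro ⟨k, hk⟩
    exact ⟨k, Finset.mem_univ k, sub_eq_zero.mpr hk⟩


lemma cycD_real (n : ℕ) (hn : 3 ≤ n) (k : Fin n) :
    cycD n k = ((2 * (1 - Real.cos (2 * Real.pi * k.val / n)) : ℝ) : ℂ) := by
  have hn0 : (n : ℂ) ≠ 0 := Nat.cast_ne_zero.mpr (by omega)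
  set θ : ℝ := 2 * Real.pi * k.val / n with hθ
  have hk : cw n ^ k.val = Complex.exp ((θ : ℂ) * Complex.I) := by
    unfold cw
    rw [← Complex.exp_nat_mul]
    congr 1
    rw [hθ]
    push_cast
    field_simp
  have hnorm : ‖cw n ^ k.val‖ = 1 := by
    rw [hk]
    exact Complex.norm_exp_ofReal_mul_I θ
  have hmul : cw n ^ ((n - 1) * k.val) * cw n ^ k.val = 1 := by
    rw [← pow_add]
    have he : (n - 1) * k.val + k.val = n * k.val := by
      calc (n - 1) * k.val + k.val = ((n - 1) + 1) * k.val := by rw [add_mul, one_mul]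
      _ = n * k.val := by rw [Nat.sub_add_cancel (by omega : 1 ≤ n)]
    rw [he, pow_mul, cw_pow_n n (by omega), one_pow]
  have hconj : cw n ^ ((n - 1) * k.val) = (starRingEnd ℂ) (cw n ^ k.val) := by
    rw [← RCLike.inv_eq_conj hnorm]
    exact eq_inv_of_mul_eq_one_left hmul
  unfold cycD
  have hre : (2 : ℂ) - cw n ^ k.val - cw n ^ ((n - 1) * k.val)
      = 2 - (cw n ^ k.val + (starRingEnd ℂ) (cw n ^ k.val)) := by
    rw [hconj]; ring
  rw [hre, Complex.add_conj, hk, Complex.exp_ofReal_mul_I_re]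
  push_cast
  ring

lemma cyc_eig_iff (n : ℕ) (hn : 3 ≤ n) (x : ℝ) :
    (x • (1 : Matrix (Fin n) (Fin n) ℝ) - cycleLap n).det = 0
      ↔ ∃ l : ℕ, l ≤ n ∧ Even l ∧ x = cycAlpha n l := by
  have hn0 : (n : ℝ) ≠ 0 := Nat.cast_ne_zero.mpr (by omega)
  rw [cyc_det_real n hn]
  constructor
  · rintro ⟨k, hk⟩
    rw [cycD_real n hn k, Complex.ofReal_inj] at hk
    by_cases h2k : 2 * k.val ≤ n
    · have harg : ((2 * k.val : ℕ) : ℝ) * Real.pi / n = 2 * Real.pi * k.val / n := by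
        push_cast; ring
      exact ⟨2 * k.val, h2k, even_two_mul _, by unfold cycAlpha; rw [harg, ← hk]⟩
    · have hkn : k.val ≤ n := le_of_lt k.isLt
      refine ⟨2 * (n - k.val), by omega, even_two_mul _, ?_⟩
      have hcast : ((2 * (n - k.val) : ℕ) : ℝ) = 2 * ((n : ℝ) - k.val) := by
        push_cast [Nat.cast_sub hkn]; ring
      unfold cycAlpha
      rw [hcast]
      have harg : 2 * ((n : ℝ) - k.val) * Real.pi / n
          = 2 * Real.pi - 2 * Real.pi * k.val / n := by
        field_simp
      rw [harg, Real.cos_two_pi_sub, hk]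
  · rintro ⟨l, hl, ⟨r, hr⟩, hx⟩
    have hrn : r < n := by omega
    refine ⟨⟨r, hrn⟩, ?_⟩
    rw [cycD_real n hn ⟨r, hrn⟩, Complex.ofReal_inj, hx]
    unfold cycAlpha
    have harg : ((l : ℕ) : ℝ) * Real.pi / n = 2 * Real.pi * r / n := by
      subst hr; push_cast; ring
    rw [harg]

theorem stmt19 (n m : ℕ) (hn : 3 ≤ n) (hm : 4 ≤ m) (wv : ℕ → ℝ)
    (hw : ∀ i, 0 ≤ wv i) (hwpos : 0 < ∑ j ∈ Finset.range n, wv j) :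
    (spectrum ℝ (unmodLap n m wv) =
      {x : ℝ | ∃ l : ℕ, l ≤ n ∧ Even l ∧ x = cycAlpha n l} ∪
        {betaMinus m (∑ j ∈ Finset.range n, wv j), 1,
          betaPlus m (∑ j ∈ Finset.range n, wv j)}) ∧
    ((∀ l : ℕ, l ≤ n → betaMinus m (∑ j ∈ Finset.range n, wv j) ≠ cycAlpha n l) →
      min (cycAlpha n 2) (betaMinus m (∑ j ∈ Finset.range n, wv j)) ∈
          spectrum ℝ (unmodLap n m wv) ∧
      0 < min (cycAlpha n 2) (betaMinus m (∑ j ∈ Finset.range n, wv j)) ∧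
      ∀ μ ∈ spectrum ℝ (unmodLap n m wv), μ ≠ 0 →
        min (cycAlpha n 2) (betaMinus m (∑ j ∈ Finset.range n, wv j)) ≤ μ) := by
  set w : ℝ := ∑ j ∈ Finset.range n, wv j with hwdef
  have hspec : ∀ x : ℝ, x ∈ spectrum ℝ (unmodLap n m wv) ↔
      ((∃ l : ℕ, l ≤ n ∧ Even l ∧ x = cycAlpha n l) ∨
        (x = betaMinus m w ∨ x = 1 ∨ x = betaPlus m w)) := by
    intro x
    rw [spec_iff_det]
    unfold unmodLap
    erw [det_block]; rw [mul_eq_zero, cyc_eig_iff n hn x, det_iff_eig, star_eig m hm w hwpos x]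
  constructor
  · ext x
    rw [hspec x]
    simp only [Set.mem_union, Set.mem_setOf_eq, Set.mem_insert_iff, Set.mem_singleton_iff]
  · intro _
    have hm4 : (4 : ℝ) ≤ (m : ℝ) := by exact_mod_cast hm
    have hd0 : 0 ≤ ((m : ℝ) + w) ^ 2 - 4 * w := disc_nonneg m hm w hwpos
    have hbpos : 0 < betaMinus m w := by
      unfold betaMinus
      have h1 : Real.sqrt (((m : ℝ) + w) ^ 2 - 4 * w) < (m : ℝ) + w := by
        rw [Real.sqrt_lt' (by linarith)]
        nlinarith
      linarith
    have hb1 : betaMinus m w < 1 := by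
      unfold betaMinus
      have h1 : (m : ℝ) + w - 2 < Real.sqrt (((m : ℝ) + w) ^ 2 - 4 * w) := by
        rw [Real.lt_sqrt (by linarith)]
        nlinarith
      linarith
    have hbb : betaMinus m w ≤ betaPlus m w := by
      unfold betaMinus betaPlus
      have := Real.sqrt_nonneg (((m : ℝ) + w) ^ 2 - 4 * w)
      linarith
    have hnpos : (0 : ℝ) < (n : ℝ) := by
      have : (3 : ℝ) ≤ (n : ℝ) := by exact_mod_cast hn
      linarith
    have hπ := Real.pi_pos
    have hapos : 0 < cycAlpha n 2 := by
      unfold cycAlpha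
      have hcos : Real.cos (2 * Real.pi / n) < 1 := by
        have h1 : 0 < 2 * Real.pi / (n : ℝ) := by positivity
        have h2 : 2 * Real.pi / (n : ℝ) ≤ Real.pi := by
          rw [div_le_iff₀ hnpos]
          have : (3 : ℝ) ≤ (n : ℝ) := by exact_mod_cast hn
          nlinarith
        have := Real.cos_lt_cos_of_nonneg_of_le_pi (le_refl 0) h2 h1
        rwa [Real.cos_zero] at this
      push_cast
      linarith
    have h0 : cycAlpha n 0 = 0 := by
      unfold cycAlpha
      norm_num
    have hmono : ∀ l : ℕ, l ≤ n → l ≠ 0 → Even l → cycAlpha n 2 ≤ cycAlpha n l := by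
      intro l hl hl0 hev
      have hl2 : 2 ≤ l := by rcases hev with ⟨r, hr⟩; omega
      have hl2' : (2 : ℝ) ≤ (l : ℝ) := by exact_mod_cast hl2
      have hln : (l : ℝ) ≤ (n : ℝ) := by exact_mod_cast hl
      unfold cycAlpha
      have hcos : Real.cos ((l : ℝ) * Real.pi / n) ≤ Real.cos (2 * Real.pi / n) := by
        apply Real.cos_le_cos_of_nonneg_of_le_pi
        · positivity
        · rw [div_le_iff₀ hnpos]; nlinarith
        · gcongr
      push_cast
      linarith
    refine ⟨?_, lt_min hapos hbpos, ?_⟩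
    · rw [hspec]
      rcases le_total (cycAlpha n 2) (betaMinus m w) with hc | hc
      · rw [min_eq_left hc]
        exact Or.inl ⟨2, by omega, even_two, rfl⟩
      · rw [min_eq_right hc]
        exact Or.inr (Or.inl rfl)
    · intro μ hμ hμ0
      rcases (hspec μ).mp hμ with ⟨l, hl, hev, rfl⟩ | hβ | rfl | rfl
      · have hl0 : l ≠ 0 := by rintro rfl; exact hμ0 h0
        exact le_trans (min_le_left _ _) (hmono l hl hl0 hev)
      · exact hβ ▸ min_le_right _ _
      · exact le_trans (min_le_right _ _) (le_of_lt hb1)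
      · exact le_trans (min_le_right _ _) hbb
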